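/- Fix real numbers t and real λ, μ with λ, μ < 0 (so that 1 - λ tanh t and 1 - μ tanh t are nonzero for t ≥ 0). Suppose λμ > 1. Then the function F(t) = ((λ - tanh t)/(1 - λ tanh t)) · ((μ - tanh t)/(1 - μ tanh t)) is strictly decreasing on (0, arctanh(1/√(λμ))). -/

import Mathlib

/-- The inverse hyperbolic tangent, `arctanh x = (1/2) log((1+x)/(1-x))`. -/
noncomputable def arctanh (x : ℝ) : ℝ := (1 / 2) * Real.log ((1 + x) / (1 - x))

lemma hasDerivAt_tanh' (t : ℝ) : HasDerivAt Real.tanh (1 - Real.tanh t ^ 2) t := by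
  have hc : Real.cosh t ≠ 0 := ne_of_gt (Real.cosh_pos t)
  have h := (Real.hasDerivAt_sinh t).div (Real.hasDerivAt_cosh t) hc
  have heq : (Real.cosh t * Real.cosh t - Real.sinh t * Real.sinh t) / Real.cosh t ^ 2
      = 1 - Real.tanh t ^ 2 := by
    rw [Real.tanh_eq_sinh_div_cosh]
    have h2 := Real.cosh_sq_sub_sinh_sq t
    field_simp
  have hfun : Real.tanh = fun x => Real.sinh x / Real.cosh x := by
    funext x; exact Real.tanh_eq_sinh_div_cosh x
  have h0 : HasDerivAt Real.tanh
      ((Real.cosh t * Real.cosh t - Real.sinh t * Real.sinh t) / Real.cosh t ^ 2) t := by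
    rw [hfun]; exact h
  exact heq ▸ h0

lemma tanh_pos_lt_one {t : ℝ} (ht : 0 < t) : 0 < Real.tanh t ∧ Real.tanh t < 1 := by
  have hc := Real.cosh_pos t
  have hs : 0 < Real.sinh t := by
    have := Real.sinh_lt_sinh.mpr ht
    simpa using this
  have hsc := Real.sinh_lt_cosh t
  rw [Real.tanh_eq_sinh_div_cosh]
  constructor
  · positivity
  · rw [div_lt_one hc]; exact hsc

/-- For `λ, μ < 0` with `λμ > 1`, the product of evolved principal curvatures
`F(t) = ((λ - tanh t)/(1 - λ tanh t))·((μ - tanh t)/(1 - μ tanh t))` is strictly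
decreasing on `(0, arctanh(1/√(λμ)))`. -/
theorem stmt6 (lam mu : ℝ) (hlam : lam < 0) (hmu : mu < 0) (h : 1 < lam * mu) :
    StrictAntiOn
      (fun t : ℝ =>
        ((lam - Real.tanh t) / (1 - lam * Real.tanh t)) *
          ((mu - Real.tanh t) / (1 - mu * Real.tanh t)))
      (Set.Ioo 0 (arctanh (1 / Real.sqrt (lam * mu)))) := by
  set c := arctanh (1 / Real.sqrt (lam * mu))
  -- key: derivative is negative for all t > 0
  have key : ∀ t ∈ Set.Ioo (0 : ℝ) c, HasDerivAt
      (fun t : ℝ =>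
        ((lam - Real.tanh t) / (1 - lam * Real.tanh t)) *
          ((mu - Real.tanh t) / (1 - mu * Real.tanh t)))
      (((-(1 - Real.tanh t ^ 2) * (1 - lam * Real.tanh t) -
          (lam - Real.tanh t) * (-(lam * (1 - Real.tanh t ^ 2)))) /
            (1 - lam * Real.tanh t) ^ 2) *
          ((mu - Real.tanh t) / (1 - mu * Real.tanh t)) +
        ((lam - Real.tanh t) / (1 - lam * Real.tanh t)) *
          ((-(1 - Real.tanh t ^ 2) * (1 - mu * Real.tanh t) -
            (mu - Real.tanh t) * (-(mu * (1 - Real.tanh t ^ 2)))) /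
              (1 - mu * Real.tanh t) ^ 2)) t := by
    intro t ht
    obtain ⟨hu0, hu1⟩ := tanh_pos_lt_one ht.1
    have hB : (1 : ℝ) - lam * Real.tanh t ≠ 0 := by nlinarith
    have hD : (1 : ℝ) - mu * Real.tanh t ≠ 0 := by nlinarith
    have hu := hasDerivAt_tanh' t
    have h1 : HasDerivAt (fun t => lam - Real.tanh t) (-(1 - Real.tanh t ^ 2)) t :=
      ((hasDerivAt_const t lam).sub hu).congr_deriv (by ring)
    have h2 : HasDerivAt (fun t => 1 - lam * Real.tanh t) (-(lam * (1 - Real.tanh t ^ 2))) t :=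
      ((hasDerivAt_const t 1).sub ((hasDerivAt_const t lam).mul hu)).congr_deriv (by ring)
    have h3 : HasDerivAt (fun t => mu - Real.tanh t) (-(1 - Real.tanh t ^ 2)) t :=
      ((hasDerivAt_const t mu).sub hu).congr_deriv (by ring)
    have h4 : HasDerivAt (fun t => 1 - mu * Real.tanh t) (-(mu * (1 - Real.tanh t ^ 2))) t :=
      ((hasDerivAt_const t 1).sub ((hasDerivAt_const t mu).mul hu)).congr_deriv (by ring)
    exact ((h1.div h2 hB).mul (h3.div h4 hD))
  apply strictAntiOn_of_deriv_neg (convex_Ioo 0 c)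
  · intro t ht
    exact ((key t ht).continuousAt).continuousWithinAt
  · rw [interior_Ioo]
    intro t ht
    rw [(key t ht).deriv]
    obtain ⟨hu0, hu1⟩ := tanh_pos_lt_one ht.1
    set u := Real.tanh t with hu
    have hB : (0 : ℝ) < 1 - lam * u := by nlinarith
    have hD : (0 : ℝ) < 1 - mu * u := by nlinarith
    have hu' : (0 : ℝ) < 1 - u ^ 2 := by nlinarith
    have hnum : ((-(1 - u ^ 2) * (1 - lam * u) - (lam - u) * (-(lam * (1 - u ^ 2)))) *
        ((mu - u) * (1 - mu * u)) + (lam - u) * (1 - lam * u) *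
        (-(1 - u ^ 2) * (1 - mu * u) - (mu - u) * (-(mu * (1 - u ^ 2))))) < 0 := by
      have hid : ((-(1 - u ^ 2) * (1 - lam * u) - (lam - u) * (-(lam * (1 - u ^ 2)))) *
          ((mu - u) * (1 - mu * u)) + (lam - u) * (1 - lam * u) *
          (-(1 - u ^ 2) * (1 - mu * u) - (mu - u) * (-(mu * (1 - u ^ 2)))))
          = (1 - u ^ 2) * ((lam * mu - 1) * ((1 + u ^ 2) * (lam + mu) - 2 * u * (lam * mu + 1))) := by
        ring
      rw [hid]
      have h1 : (1 + u ^ 2) * (lam + mu) - 2 * u * (lam * mu + 1) < 0 := by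
        have ha : (1 + u ^ 2) * (lam + mu) < 0 :=
          mul_neg_of_pos_of_neg (by positivity) (by linarith)
        have hb : 0 < 2 * u * (lam * mu + 1) := by positivity
        linarith
      have h2 : (0 : ℝ) < lam * mu - 1 := by linarith
      exact mul_neg_of_pos_of_neg hu' (mul_neg_of_pos_of_neg h2 h1)
    have hexpr : ((-(1 - u ^ 2) * (1 - lam * u) - (lam - u) * (-(lam * (1 - u ^ 2)))) /
            (1 - lam * u) ^ 2) * ((mu - u) / (1 - mu * u)) +
        ((lam - u) / (1 - lam * u)) *
          ((-(1 - u ^ 2) * (1 - mu * u) - (mu - u) * (-(mu * (1 - u ^ 2)))) /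
              (1 - mu * u) ^ 2)
        = (((-(1 - u ^ 2) * (1 - lam * u) - (lam - u) * (-(lam * (1 - u ^ 2)))) *
        ((mu - u) * (1 - mu * u)) + (lam - u) * (1 - lam * u) *
        (-(1 - u ^ 2) * (1 - mu * u) - (mu - u) * (-(mu * (1 - u ^ 2)))))) /
          ((1 - lam * u) ^ 2 * (1 - mu * u) ^ 2) := by
      field_simp
    rw [hexpr]
    apply div_neg_of_neg_of_pos hnum
    positivity
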